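/- For every x ∈ (0, π/2) and every integer m ≥ 2, |(sin x / x)² + (tan x)/x - (2 + (1/cos x)·Σ_{k=2}^{m} (-1)^{k} D(k) x^{2k})| < D(m+1) x^{2m+2} / cos x. -/

import Mathlib

open Real Finset

/-- The coefficient `D(k) = (3^(2k+2) - 32k² - 40k - 9) / (4·(2k+2)!)`. -/
noncomputable def wchD (k : ℕ) : ℝ :=
  ((3 : ℝ) ^ (2 * k + 2) - 32 * (k : ℝ) ^ 2 - 40 * (k : ℝ) - 9) /
    (4 * (Nat.factorial (2 * k + 2) : ℝ))

/-- The numerator of `wchD`. -/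
noncomputable def wchNum (k : ℕ) : ℝ :=
  (3 : ℝ) ^ (2 * k + 2) - 32 * (k : ℝ) ^ 2 - 40 * (k : ℝ) - 9

lemma wchD_eq (k : ℕ) : wchD k = wchNum k / (4 * (Nat.factorial (2 * k + 2) : ℝ)) := rfl

lemma wchNum_succ (k : ℕ) : wchNum (k + 1) = 9 * wchNum k + 256 * (k : ℝ) * ((k : ℝ) + 1) := by
  simp only [wchNum]
  push_cast
  ring

lemma wchNum_pos {k : ℕ} (hk : 2 ≤ k) : 0 < wchNum k := by
  induction k with
  | zero => omega
  | succ n ih =>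
    rcases Nat.lt_or_ge n 2 with h | h
    · interval_cases n
      · omega
      · norm_num [wchNum]
    · have := ih h
      rw [wchNum_succ]
      have : (0:ℝ) ≤ (n:ℝ) := Nat.cast_nonneg n
      nlinarith

lemma wch_aux : ∀ k : ℕ, 2 ≤ k → 256 * (k : ℝ) * ((k : ℝ) + 1) ≤ 3 * wchNum k := by
  intro k hk
  induction k with
  | zero => omega
  | succ n ih =>
    rcases Nat.lt_or_ge n 2 with h | h
    · interval_cases n
      · omega
      · norm_num [wchNum]
    · have h1 := ih h
      have h2 := wchNum_pos h
      have h3 : (2:ℝ) ≤ (n:ℝ) := by exact_mod_cast h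
      rw [wchNum_succ]
      push_cast
      nlinarith

lemma wchNum_succ_le {k : ℕ} (hk : 2 ≤ k) : wchNum (k + 1) ≤ 12 * wchNum k := by
  have := wch_aux k hk
  rw [wchNum_succ]
  linarith

lemma wchD_pos {k : ℕ} (hk : 2 ≤ k) : 0 < wchD k := by
  rw [wchD_eq]
  apply div_pos (wchNum_pos hk)
  positivity

lemma wchD_ratio {k : ℕ} (hk : 3 ≤ k) {x : ℝ} (hx : 0 < x) (hx2 : x < π / 2) :
    wchD (k + 1) * x ^ (2 * (k + 1) + 2) ≤ 2 / 5 * (wchD k * x ^ (2 * k + 2)) := by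
  have hx3 : x ^ 2 ≤ 3 := by nlinarith [pi_lt_d2]
  set F : ℝ := ((2 * k + 2).factorial : ℝ) with hF
  have hFpos : (0:ℝ) < F := by positivity
  have hfac : (((2 * (k + 1) + 2).factorial : ℕ) : ℝ)
      = (2 * (k:ℝ) + 4) * ((2 * (k:ℝ) + 3) * F) := by
    have h1 : 2 * (k + 1) + 2 = (2 * k + 3) + 1 := by ring
    have h2 : 2 * k + 3 = (2 * k + 2) + 1 := by ring
    rw [h1, Nat.factorial_succ, h2, Nat.factorial_succ]
    push_cast [hF]
    ring
  have hk' : (3:ℝ) ≤ (k:ℝ) := by exact_mod_cast hk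
  have key : wchNum (k + 1) * x ^ 2
      ≤ 2 / 5 * ((2 * (k:ℝ) + 3) * (2 * (k:ℝ) + 4)) * wchNum k := by
    have h12 := wchNum_succ_le (by omega : 2 ≤ k)
    have hpos := wchNum_pos (by omega : 2 ≤ k)
    have h90 : (90:ℝ) ≤ (2 * (k:ℝ) + 3) * (2 * (k:ℝ) + 4) := by nlinarith
    calc wchNum (k + 1) * x ^ 2 ≤ 12 * wchNum k * x ^ 2 :=
          mul_le_mul_of_nonneg_right h12 (sq_nonneg x)
      _ ≤ 12 * (3 * wchNum k) := by nlinarith [mul_le_mul_of_nonneg_left hx3 hpos.le]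
      _ ≤ 2 / 5 * ((2 * (k:ℝ) + 3) * (2 * (k:ℝ) + 4)) * wchNum k := by
          nlinarith [mul_le_mul_of_nonneg_right h90 hpos.le]
  have e1 : wchD (k + 1) * x ^ (2 * (k + 1) + 2)
      = wchNum (k + 1) * x ^ (2 * (k + 1) + 2)
        / (4 * ((2 * (k:ℝ) + 4) * ((2 * (k:ℝ) + 3) * F))) := by
    rw [wchD_eq, hfac]; ring
  have e2 : 2 / 5 * (wchD k * x ^ (2 * k + 2))
      = 2 / 5 * (wchNum k * x ^ (2 * k + 2)) / (4 * F) := by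
    rw [wchD_eq, hF]; ring
  rw [e1, e2, div_le_div_iff₀ (by positivity) (by positivity)]
  have hxp : x ^ (2 * (k + 1) + 2) = x ^ (2 * k + 2) * x ^ 2 := by
    rw [show 2 * (k + 1) + 2 = (2 * k + 2) + 2 from by ring, pow_add]
  have hxpnn : (0:ℝ) ≤ x ^ (2 * k + 2) := by positivity
  rw [hxp]
  nlinarith [mul_le_mul_of_nonneg_right key (mul_nonneg hxpnn (by positivity : (0:ℝ) ≤ 4 * F))]

lemma wchD_coef (x : ℝ) (k : ℕ) :
    ((-1:ℝ) ^ (k+1) * x ^ (2*(k+1)) / ((2*(k+1)).factorial : ℝ)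
      - (-1:ℝ) ^ (k+1) * (3*x) ^ (2*(k+1)) / ((2*(k+1)).factorial : ℝ)) / 4
    + x * ((-1:ℝ) ^ k * x ^ (2*k+1) / ((2*k+1).factorial : ℝ))
    - 2 * x ^ 2 * ((-1:ℝ) ^ k * x ^ (2*k) / ((2*k).factorial : ℝ))
    = (-1:ℝ) ^ k * wchD k * x ^ (2*k+2) := by
  have h0 : ((2*k).factorial : ℝ) ≠ 0 :=
    Nat.cast_ne_zero.mpr (Nat.factorial_ne_zero _)
  have hf1 : ((2*k+1).factorial : ℝ) = (2*(k:ℝ)+1) * ((2*k).factorial : ℝ) := by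
    rw [Nat.factorial_succ]; push_cast; ring
  have hf2 : ((2*(k+1)).factorial : ℝ)
      = (2*(k:ℝ)+2) * ((2*(k:ℝ)+1) * ((2*k).factorial : ℝ)) := by
    rw [show 2*(k+1) = (2*k+1)+1 from by ring, Nat.factorial_succ, Nat.factorial_succ]
    push_cast; ring
  have hf2' : ((2*k+2).factorial : ℝ)
      = (2*(k:ℝ)+2) * ((2*(k:ℝ)+1) * ((2*k).factorial : ℝ)) := by
    rw [show 2*k+2 = 2*(k+1) from by ring]; exact hf2
  have hx1 : x ^ (2*(k+1)) = x ^ (2*k) * x ^ 2 := by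
    rw [show 2*(k+1) = 2*k+2 from by ring, pow_add]
  have hx2 : (3*x) ^ (2*(k+1)) = 3 ^ (2*k+2) * (x ^ (2*k) * x ^ 2) := by
    rw [show 2*(k+1) = 2*k+2 from by ring, mul_pow, pow_add, pow_add]
  have hx3 : x ^ (2*k+1) = x ^ (2*k) * x := pow_succ x (2*k)
  have hx4 : x ^ (2*k+2) = x ^ (2*k) * x ^ 2 := pow_add x (2*k) 2
  have hpow : (-1:ℝ) ^ (k+1) = -(-1:ℝ)^k := by rw [pow_succ]; ring
  rw [wchD, hf1, hf2, hf2', hx1, hx2, hx3, hx4, hpow]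
  have h1 : (2*(k:ℝ)+1) ≠ 0 := by positivity
  have h2 : (2*(k:ℝ)+2) ≠ 0 := by positivity
  field_simp
  ring

/-- The general term of the series. -/
noncomputable def wchF (x : ℝ) (k : ℕ) : ℝ := (-1:ℝ) ^ k * wchD k * x ^ (2 * k + 2)

/-- The absolute value of the general term. -/
noncomputable def wchA (x : ℝ) (k : ℕ) : ℝ := wchD k * x ^ (2 * k + 2)

lemma wchA_pos {x : ℝ} (hx : 0 < x) {k : ℕ} (hk : 2 ≤ k) : 0 < wchA x k :=
  mul_pos (wchD_pos hk) (pow_pos hx _)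

lemma wchA_ratio {k : ℕ} (hk : 3 ≤ k) {x : ℝ} (hx : 0 < x) (hx2 : x < π / 2) :
    wchA x (k + 1) ≤ 2 / 5 * wchA x k := by
  have := wchD_ratio hk hx hx2
  simpa [wchA] using this

lemma abs_wchF {x : ℝ} (hx : 0 < x) {k : ℕ} (hk : 2 ≤ k) : |wchF x k| = wchA x k := by
  rw [wchF, wchA, abs_mul, abs_mul, abs_pow, abs_neg, abs_one, one_pow, one_mul,
    abs_of_pos (wchD_pos hk), abs_of_pos (pow_pos hx _)]

lemma hasSum_wchF (x : ℝ) :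
    HasSum (wchF x)
      ((Real.cos x - Real.cos (3 * x)) / 4 + x * Real.sin x - 2 * x ^ 2 * Real.cos x) := by
  have hc1 := Real.hasSum_cos x
  have hc3 := Real.hasSum_cos (3 * x)
  have hs1 := Real.hasSum_sin x
  have h12 : HasSum (fun n : ℕ => ((-1:ℝ)^n * x^(2*n)/((2*n).factorial : ℝ)
      - (-1:ℝ)^n * (3*x)^(2*n)/((2*n).factorial : ℝ)) / 4)
      ((Real.cos x - Real.cos (3*x)) / 4) := (hc1.sub hc3).div_const 4
  have h12' : HasSum (fun n : ℕ => ((-1:ℝ)^(n+1) * x^(2*(n+1))/((2*(n+1)).factorial : ℝ)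
      - (-1:ℝ)^(n+1) * (3*x)^(2*(n+1))/((2*(n+1)).factorial : ℝ)) / 4)
      ((Real.cos x - Real.cos (3*x)) / 4) := by
    refine (hasSum_nat_add_iff (f := fun n : ℕ => ((-1:ℝ)^n * x^(2*n)/((2*n).factorial : ℝ)
      - (-1:ℝ)^n * (3*x)^(2*n)/((2*n).factorial : ℝ)) / 4) 1).2 ?_
    simpa using h12
  have hxs := hs1.mul_left x
  have hc1' := hc1.mul_left (2 * x ^ 2)
  have h := (h12'.add hxs).sub hc1'
  have hfun : wchF x = _ := funext fun k => (wchD_coef x k).symm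
  rw [hfun]
  exact h

lemma wchA_geo {x : ℝ} (hx : 0 < x) (hx2 : x < π / 2) {m : ℕ} (hm : 2 ≤ m) :
    ∀ i : ℕ, wchA x (m + 3 + i) ≤ wchA x (m + 3) * (2/5) ^ i := by
  intro i
  induction i with
  | zero => simp
  | succ n ih =>
    have h := wchA_ratio (show 3 ≤ m + 3 + n by omega) hx hx2
    calc wchA x (m + 3 + (n + 1)) = wchA x ((m + 3 + n) + 1) := by
          rw [show m + 3 + (n + 1) = (m + 3 + n) + 1 from by omega]
      _ ≤ 2 / 5 * wchA x (m + 3 + n) := h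
      _ ≤ 2 / 5 * (wchA x (m + 3) * (2/5) ^ n) :=
          mul_le_mul_of_nonneg_left ih (by norm_num)
      _ = wchA x (m + 3) * (2/5) ^ (n + 1) := by ring

lemma tail_bound {x : ℝ} (hx : 0 < x) (hx2 : x < π / 2) {m : ℕ} (hm : 2 ≤ m)
    (hsum : Summable (wchF x)) :
    |∑' i, wchF x (i + (m + 1))| < wchA x (m + 1) := by
  have hT2 : Summable (fun i => wchF x (i + (m + 1))) := (summable_nat_add_iff (m+1)).2 hsum
  have hsplit := Summable.sum_add_tsum_nat_add (f := fun i => wchF x (i + (m + 1))) 2 hT2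
  have hidx : ∀ i : ℕ, i + 2 + (m + 1) = m + 3 + i := fun i => by omega
  have hFR : ∀ i : ℕ, |wchF x (i + 2 + (m + 1))| ≤ wchA x (m + 3) * (2/5) ^ i := by
    intro i
    rw [hidx i, abs_wchF hx (by omega)]
    exact wchA_geo hx hx2 hm i
  have hgsum : Summable (fun i : ℕ => wchA x (m + 3) * (2/5 : ℝ) ^ i) :=
    (summable_geometric_of_lt_one (by norm_num) (by norm_num)).mul_left _
  have hRsum : Summable (fun i => |wchF x (i + 2 + (m + 1))|) :=
    Summable.of_nonneg_of_le (fun _ => abs_nonneg _) hFR hgsum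
  have hRabs : |∑' i, wchF x (i + 2 + (m + 1))| ≤ wchA x (m + 3) * (5/3) := by
    calc |∑' i, wchF x (i + 2 + (m + 1))| ≤ ∑' i, |wchF x (i + 2 + (m + 1))| := by
          simpa [Real.norm_eq_abs] using
            norm_tsum_le_tsum_norm (f := fun i => wchF x (i + 2 + (m + 1)))
              (by simpa [Real.norm_eq_abs] using hRsum)
      _ ≤ ∑' i, wchA x (m + 3) * (2/5 : ℝ) ^ i := Summable.tsum_le_tsum hFR hRsum hgsum
      _ = wchA x (m + 3) * (5/3) := by
          rw [tsum_mul_left, tsum_geometric_of_lt_one (by norm_num) (by norm_num)]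
          norm_num
  have h01 : wchF x (0 + (m + 1)) + wchF x (1 + (m + 1))
      = (-1:ℝ) ^ (m + 1) * (wchA x (m + 1) - wchA x (m + 2)) := by
    rw [show (0 : ℕ) + (m + 1) = m + 1 from by omega,
      show (1 : ℕ) + (m + 1) = (m + 1) + 1 from by omega]
    simp only [wchF, wchA, pow_succ]
    ring
  have hr1 : wchA x (m + 2) ≤ 2 / 5 * wchA x (m + 1) :=
    wchA_ratio (by omega) hx hx2
  have hr2 : wchA x (m + 3) ≤ 2 / 5 * wchA x (m + 2) :=
    wchA_ratio (by omega) hx hx2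
  have hp1 := wchA_pos hx (show 2 ≤ m + 1 by omega)
  have hp2 := wchA_pos hx (show 2 ≤ m + 2 by omega)
  have habs01 : |wchF x (0 + (m + 1)) + wchF x (1 + (m + 1))|
      = wchA x (m + 1) - wchA x (m + 2) := by
    rw [h01, abs_mul, abs_pow, abs_neg, abs_one, one_pow, one_mul,
      abs_of_nonneg (by linarith)]
  calc |∑' i, wchF x (i + (m + 1))|
      = |(wchF x (0 + (m + 1)) + wchF x (1 + (m + 1)))
          + ∑' i, wchF x (i + 2 + (m + 1))| := by
        rw [← hsplit]
        norm_num [Finset.sum_range_succ]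
    _ ≤ |wchF x (0 + (m + 1)) + wchF x (1 + (m + 1))|
          + |∑' i, wchF x (i + 2 + (m + 1))| := abs_add_le _ _
    _ = (wchA x (m + 1) - wchA x (m + 2)) + |∑' i, wchF x (i + 2 + (m + 1))| := by
        rw [habs01]
    _ < wchA x (m + 1) := by nlinarith

theorem sinx_div_x_sq_add_tanx_div_x_error :
    ∀ x ∈ Set.Ioo (0 : ℝ) (π / 2), ∀ m : ℕ, 2 ≤ m →
      |(Real.sin x / x) ^ 2 + Real.tan x / x
          - (2 + (1 / Real.cos x) *
              ∑ k ∈ Finset.Icc 2 m, (-1 : ℝ) ^ k * wchD k * x ^ (2 * k))|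
        < wchD (m + 1) * x ^ (2 * m + 2) / Real.cos x := by
  rintro x ⟨hx, hx2⟩ m hm
  have hc : 0 < Real.cos x :=
    Real.cos_pos_of_mem_Ioo ⟨by linarith [pi_pos], hx2⟩
  have hF := hasSum_wchF x
  have hsum : Summable (wchF x) := hF.summable
  set S : ℝ := ∑ k ∈ Finset.Icc 2 m, (-1 : ℝ) ^ k * wchD k * x ^ (2 * k) with hS
  set T : ℝ := ∑' i, wchF x (i + (m + 1)) with hT
  have hsplit : ∑ i ∈ range (m + 1), wchF x i + T
      = (Real.cos x - Real.cos (3 * x)) / 4 + x * Real.sin x - 2 * x ^ 2 * Real.cos x := by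
    rw [hT, Summable.sum_add_tsum_nat_add (m + 1) hsum, hF.tsum_eq]
  have hpart : ∑ i ∈ range (m + 1), wchF x i = S * x ^ 2 := by
    have hsub : Finset.Icc 2 m ⊆ range (m + 1) := by
      intro i hi
      simp only [Finset.mem_Icc] at hi
      simp only [Finset.mem_range]
      omega
    have hzero : ∀ i ∈ range (m + 1), i ∉ Finset.Icc 2 m → wchF x i = 0 := by
      intro i hi hni
      simp only [Finset.mem_range] at hi
      simp only [Finset.mem_Icc] at hni
      have : i = 0 ∨ i = 1 := by omega
      rcases this with h | h <;> subst h <;>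
        norm_num [wchF, wchD, Nat.factorial]
    rw [← Finset.sum_subset hsub hzero, hS, Finset.sum_mul]
    refine Finset.sum_congr rfl fun k _ => ?_
    rw [wchF, pow_add]
    ring
  have htail : |T| < wchA x (m + 1) := tail_bound hx hx2 hm hsum
  have hkey : (Real.sin x / x) ^ 2 + Real.tan x / x - (2 + (1 / Real.cos x) * S)
      = T / (x ^ 2 * Real.cos x) := by
    rw [eq_div_iff (by positivity)]
    have hTg : T = ((Real.cos x - Real.cos (3 * x)) / 4 + x * Real.sin x
        - 2 * x ^ 2 * Real.cos x) - S * x ^ 2 := by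
      rw [← hpart] at *
      linarith [hsplit]
    rw [hTg, Real.tan_eq_sin_div_cos, Real.cos_three_mul]
    field_simp
    linear_combination 4 * Real.cos x * Real.sin_sq_add_cos_sq x
  rw [hkey, abs_div, abs_of_pos (by positivity : (0:ℝ) < x ^ 2 * Real.cos x),
    div_lt_div_iff₀ (by positivity) hc]
  have h1 : |T| * Real.cos x < wchA x (m + 1) * Real.cos x :=
    mul_lt_mul_of_pos_right htail hc
  calc |T| * Real.cos x < wchA x (m + 1) * Real.cos x := h1
    _ = wchD (m + 1) * x ^ (2 * m + 2) * (x ^ 2 * Real.cos x) := by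
        rw [wchA, show 2 * (m + 1) + 2 = (2 * m + 2) + 2 from by ring, pow_add]
        ring
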